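/- Let $\alpha < 0$ and let $\Delta U^a, \Delta U^v : (0,1) \to \mathbb{R}$ be continuous, bounded above, and bounded below by a positive constant. Then the function $\Phi(q) = q^\alpha \Delta U^a(q) - (1-q)^\alpha \Delta U^v(q)$ satisfies $\lim_{q\to 0^+}\Phi(q) = +\infty$ and $\lim_{q\to 1^-}\Phi(q) = -\infty$, and hence $\Phi$ has a zero $q^* \in (0,1)$. -/
import Mathlib

open Filter Set Real Topology

lemma rpow_tendsto_zero_right {α : ℝ} (hα : α < 0) :
    Tendsto (fun q : ℝ => q ^ α) (𝓝[>] 0) atTop := by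
  have h1 : Tendsto (fun q : ℝ => (q⁻¹) ^ (-α)) (𝓝[>] (0:ℝ)) atTop :=
    (tendsto_rpow_atTop (by linarith)).comp tendsto_inv_nhdsGT_zero
  refine h1.congr' ?_
  filter_upwards [self_mem_nhdsWithin] with q (hq : 0 < q)
  rw [Real.inv_rpow hq.le, ← Real.rpow_neg hq.le, neg_neg]

theorem stmt_17 (α : ℝ) (hα : α < 0)
    (ΔUa ΔUv : ℝ → ℝ)
    (hconta : ContinuousOn ΔUa (Set.Ioo 0 1))
    (hcontv : ContinuousOn ΔUv (Set.Ioo 0 1))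
    (M : ℝ) (hub : ∀ q ∈ Set.Ioo (0:ℝ) 1, ΔUa q ≤ M ∧ ΔUv q ≤ M)
    (m : ℝ) (hm : 0 < m)
    (hlb : ∀ q ∈ Set.Ioo (0:ℝ) 1, m ≤ ΔUa q ∧ m ≤ ΔUv q)
    (Φ : ℝ → ℝ)
    (hΦ : ∀ q, Φ q = q ^ α * ΔUa q - (1-q) ^ α * ΔUv q) :
    Filter.Tendsto Φ (nhdsWithin 0 (Set.Ioo 0 1)) Filter.atTop
    ∧ Filter.Tendsto Φ (nhdsWithin 1 (Set.Ioo 0 1)) Filter.atBot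
    ∧ ∃ qstar ∈ Set.Ioo (0:ℝ) 1, Φ qstar = 0 := by
  have hmM : m ≤ M := le_trans (hlb (1/2) (by norm_num)).1 (hub (1/2) (by norm_num)).1
  have hM : 0 < M := lt_of_lt_of_le hm hmM
  set C : ℝ := ((1:ℝ)/2) ^ α * M with hC
  -- key bound near 0
  have key0 : ∀ q ∈ Ioo (0:ℝ) 1, q < 1/2 → m * q ^ α - C ≤ Φ q := by
    intro q hq1 hq2
    rw [hΦ]
    have hqpos : (0:ℝ) < q ^ α := Real.rpow_pos_of_pos hq1.1 α
    have h1 : m * q ^ α ≤ q ^ α * ΔUa q := by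
      rw [mul_comm]; exact mul_le_mul_of_nonneg_left (hlb q hq1).1 hqpos.le
    have h2 : (1-q) ^ α * ΔUv q ≤ C := by
      have hb : (1/2:ℝ) ≤ 1 - q := by linarith
      have hbase : (1-q) ^ α ≤ ((1:ℝ)/2) ^ α :=
        Real.rpow_le_rpow_of_nonpos (by norm_num) hb hα.le
      have hvpos : 0 < ΔUv q := lt_of_lt_of_le hm (hlb q hq1).2
      calc (1-q) ^ α * ΔUv q ≤ ((1:ℝ)/2) ^ α * ΔUv q :=
            mul_le_mul_of_nonneg_right hbase hvpos.le
        _ ≤ C := mul_le_mul_of_nonneg_left (hub q hq1).2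
            (Real.rpow_pos_of_pos (by norm_num) α).le
    linarith
  -- key bound near 1
  have key1 : ∀ q ∈ Ioo (0:ℝ) 1, 1/2 < q → Φ q ≤ C - m * (1-q) ^ α := by
    intro q hq1 hq2
    rw [hΦ]
    have hbpos : (0:ℝ) < (1-q) ^ α := Real.rpow_pos_of_pos (by linarith [hq1.2]) α
    have h1 : m * (1-q) ^ α ≤ (1-q) ^ α * ΔUv q := by
      rw [mul_comm]; exact mul_le_mul_of_nonneg_left (hlb q hq1).2 hbpos.le
    have h2 : q ^ α * ΔUa q ≤ C := by
      have hbase : q ^ α ≤ ((1:ℝ)/2) ^ α :=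
        Real.rpow_le_rpow_of_nonpos (by norm_num) hq2.le hα.le
      have hapos : 0 < ΔUa q := lt_of_lt_of_le hm (hlb q hq1).1
      calc q ^ α * ΔUa q ≤ ((1:ℝ)/2) ^ α * ΔUa q :=
            mul_le_mul_of_nonneg_right hbase hapos.le
        _ ≤ C := mul_le_mul_of_nonneg_left (hub q hq1).1
            (Real.rpow_pos_of_pos (by norm_num) α).le
    linarith
  -- Tendsto at 0
  have hsub0 : 𝓝[Ioo (0:ℝ) 1] 0 ≤ 𝓝[>] (0:ℝ) :=
    nhdsWithin_mono _ (Ioo_subset_Ioi_self)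
  have htop : Tendsto Φ (𝓝[Ioo (0:ℝ) 1] 0) atTop := by
    have h1 : Tendsto (fun q : ℝ => m * q ^ α - C) (𝓝[Ioo (0:ℝ) 1] 0) atTop :=
      (tendsto_atTop_add_const_right _ (-C)
        (((rpow_tendsto_zero_right hα).mono_left hsub0).const_mul_atTop hm)).congr
        (by intro x; ring)
    refine tendsto_atTop_mono' _ ?_ h1
    have hmem : Ioo (0:ℝ) (1/2) ∈ 𝓝[Ioo (0:ℝ) 1] 0 := by
      refine mem_nhdsWithin.2 ⟨Iio (1/2), isOpen_Iio, by norm_num, ?_⟩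
      rintro x ⟨hx1, hx2, _⟩; exact ⟨hx2, hx1⟩
    filter_upwards [hmem, self_mem_nhdsWithin] with q hq hq1
    exact key0 q hq1 hq.2
  -- Tendsto at 1
  have hbot : Tendsto Φ (𝓝[Ioo (0:ℝ) 1] 1) atBot := by
    have hcomp : Tendsto (fun q : ℝ => 1 - q) (𝓝[Ioo (0:ℝ) 1] 1) (𝓝[>] (0:ℝ)) := by
      refine tendsto_nhdsWithin_of_tendsto_nhds_of_eventually_within _ ?_ ?_
      · have : Tendsto (fun q : ℝ => 1 - q) (𝓝 (1:ℝ)) (𝓝 (1 - 1)) :=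
          (tendsto_const_nhds.sub tendsto_id)
        simpa using this.mono_left nhdsWithin_le_nhds
      · filter_upwards [self_mem_nhdsWithin] with q hq
        exact sub_pos.2 hq.2
    have h1 : Tendsto (fun q : ℝ => C - m * (1-q) ^ α) (𝓝[Ioo (0:ℝ) 1] 1) atBot := by
      have : Tendsto (fun q : ℝ => m * (1-q) ^ α) (𝓝[Ioo (0:ℝ) 1] 1) atTop :=
        (((rpow_tendsto_zero_right hα).comp hcomp)).const_mul_atTop hm
      simpa using tendsto_neg_atBot_iff.mpr
        (tendsto_atTop_add_const_right _ (-C) this) |>.congr (by intro x; ring)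
    refine tendsto_atBot_mono' _ ?_ h1
    have hmem : Ioo (1/2:ℝ) 1 ∈ 𝓝[Ioo (0:ℝ) 1] 1 := by
      refine mem_nhdsWithin.2 ⟨Ioi (1/2), isOpen_Ioi, by norm_num, ?_⟩
      rintro x ⟨hx1, _, hx2⟩; exact ⟨hx1, hx2⟩
    filter_upwards [hmem, self_mem_nhdsWithin] with q hq hq1
    exact key1 q hq1 hq.1
  refine ⟨htop, hbot, ?_⟩
  -- zero via IVT
  have hne0 : (𝓝[Ioo (0:ℝ) 1] (0:ℝ)).NeBot := left_nhdsWithin_Ioo_neBot (by norm_num)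
  have hne1 : (𝓝[Ioo (0:ℝ) 1] (1:ℝ)).NeBot := right_nhdsWithin_Ioo_neBot (by norm_num)
  obtain ⟨a, ha⟩ := (htop.eventually_ge_atTop 1).and
    (((eventually_lt_nhds (by norm_num : (0:ℝ) < 1/2)).filter_mono nhdsWithin_le_nhds).and
      self_mem_nhdsWithin) |>.exists
  obtain ⟨b, hb⟩ := (hbot.eventually_le_atBot (-1)).and
    (((eventually_gt_nhds (by norm_num : (1/2:ℝ) < 1)).filter_mono nhdsWithin_le_nhds).and
      self_mem_nhdsWithin) |>.exists
  obtain ⟨hΦa, ha2, ha3⟩ := ha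
  obtain ⟨hΦb, hb2, hb3⟩ := hb
  have hab : a < b := lt_trans ha2 hb2
  have hIcc : Icc a b ⊆ Ioo (0:ℝ) 1 := fun x hx => ⟨lt_of_lt_of_le ha3.1 hx.1,
    lt_of_le_of_lt hx.2 hb3.2⟩
  have hΦcont : ContinuousOn Φ (Icc a b) := by
    have : ContinuousOn (fun q : ℝ => q ^ α * ΔUa q - (1-q) ^ α * ΔUv q) (Ioo 0 1) := by
      apply ContinuousOn.sub
      · exact (ContinuousOn.rpow_const continuousOn_id
          (fun x hx => Or.inl (ne_of_gt hx.1))).mul hconta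
      · exact (ContinuousOn.rpow_const (continuousOn_const.sub continuousOn_id)
          (fun x hx => Or.inl (by simp; linarith [hx.2]))).mul hcontv
    exact (this.congr (fun x _ => hΦ x)).mono hIcc
  have h0 : (0:ℝ) ∈ Icc (Φ b) (Φ a) := ⟨by linarith, by linarith⟩
  obtain ⟨c, hc, hc0⟩ := intermediate_value_Icc' hab.le hΦcont h0
  exact ⟨c, hIcc hc, hc0⟩
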